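/- Let V be a complex Hilbert space with inner product (·,·) and norm ‖·‖, a_ξ a continuous sesquilinear form with |a_ξ(u,v)| ≤ C_c‖u‖‖v‖, coercive with Im(Θ a_ξ(v,v)) ≥ γ‖v‖² for some |Θ| = 1 and γ > 0. Let V⁰,…,V^N be closed subspaces of V, and for each ℓ let T^ℓ : V → V^ℓ be the a_ξ-projection defined by a_ξ(T^ℓ v, w) = a_ξ(v, w) for all w ∈ V^ℓ. Assume the norm-of-sum bound ‖∑_{ℓ=0}^N u^ℓ‖² ≤ K ∑_{ℓ=0}^N ‖u^ℓ‖² for all choices u^ℓ ∈ V^ℓ. Then with T := ∑_{ℓ=0}^N T^ℓ, one has ‖T v‖ ≤ K (C_c/γ) ‖v‖ for all v ∈ V. -/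

import Mathlib

/-- Abstract additive Schwarz operator norm bound: with a continuous (constant `C_c`),
coercive (`Im(Θ a(v,v)) ≥ γ‖v‖²`, `|Θ| = 1`) sesquilinear form `a`, `a`-projections
`T ℓ` onto subspaces `Vsub ℓ`, and the norm-of-sum bound with constant `K`, the operator
`T = ∑ T ℓ` satisfies `‖T v‖ ≤ K (C_c/γ) ‖v‖`. -/
theorem stmt6 {V : Type*} [NormedAddCommGroup V] [InnerProductSpace ℂ V] [CompleteSpace V]
    (N : ℕ) (a : V → V → ℂ) (Cc γ K : ℝ) (Θ : ℂ)
    (hCc : 0 < Cc) (hγ : 0 < γ) (hK : 0 < K) (hΘ : ‖Θ‖ = 1)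
    (hadd : ∀ u v w : V, a u (v + w) = a u v + a u w)
    (hcont : ∀ u v : V, ‖a u v‖ ≤ Cc * ‖u‖ * ‖v‖)
    (hcoer : ∀ v : V, γ * ‖v‖ ^ 2 ≤ (Θ * a v v).im)
    (Vsub : Fin (N + 1) → Submodule ℂ V) (T : Fin (N + 1) → V → V)
    (hrange : ∀ ℓ v, T ℓ v ∈ Vsub ℓ)
    (hproj : ∀ ℓ (v : V), ∀ w ∈ Vsub ℓ, a (T ℓ v) w = a v w)
    (hsum : ∀ u : Fin (N + 1) → V, (∀ ℓ, u ℓ ∈ Vsub ℓ) →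
      ‖∑ ℓ, u ℓ‖ ^ 2 ≤ K * ∑ ℓ, ‖u ℓ‖ ^ 2) :
    ∀ v : V, ‖∑ ℓ, T ℓ v‖ ≤ K * (Cc / γ) * ‖v‖ := by
  intro v
  set u : V := ∑ ℓ, T ℓ v with hu
  rcases eq_or_lt_of_le (norm_nonneg u) with h0 | h0
  · rw [← h0]
    positivity
  -- a is additive in second variable, with a _ 0 = 0
  have hzero : ∀ x : V, a x 0 = 0 := by
    intro x
    have := hadd x 0 0
    simpa using this
  have hsum2 : ∀ x : V, a x u = ∑ ℓ, a x (T ℓ v) := by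
    intro x
    rw [hu]
    induction (Finset.univ : Finset (Fin (N + 1))) using Finset.induction with
    | empty => simpa using hzero x
    | insert _ _ hmem ih =>
        rw [Finset.sum_insert hmem, Finset.sum_insert hmem, hadd, ih]
  -- key estimate
  have key : γ * ∑ ℓ, ‖T ℓ v‖ ^ 2 ≤ Cc * ‖v‖ * ‖u‖ := by
    calc γ * ∑ ℓ, ‖T ℓ v‖ ^ 2 = ∑ ℓ, γ * ‖T ℓ v‖ ^ 2 := by rw [Finset.mul_sum]
    _ ≤ ∑ ℓ, (Θ * a (T ℓ v) (T ℓ v)).im := Finset.sum_le_sum fun ℓ _ => hcoer (T ℓ v)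
    _ = ∑ ℓ, (Θ * a v (T ℓ v)).im := by
        refine Finset.sum_congr rfl fun ℓ _ => ?_
        rw [hproj ℓ v (T ℓ v) (hrange ℓ v)]
    _ = (Θ * a v u).im := by
        rw [hsum2 v, Finset.mul_sum, Complex.im_sum]
    _ ≤ ‖Θ * a v u‖ := Complex.im_le_norm _
    _ = ‖a v u‖ := by rw [norm_mul, hΘ, one_mul]
    _ ≤ Cc * ‖v‖ * ‖u‖ := hcont v u
  have hub : ‖u‖ ^ 2 ≤ K * ∑ ℓ, ‖T ℓ v‖ ^ 2 := hsum (fun ℓ => T ℓ v) (fun ℓ => hrange ℓ v)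
  have : ‖u‖ * ‖u‖ ≤ (K * (Cc / γ) * ‖v‖) * ‖u‖ := by
    have h1 : ∑ ℓ, ‖T ℓ v‖ ^ 2 ≤ Cc * ‖v‖ * ‖u‖ / γ := by
      rw [le_div_iff₀ hγ]; linarith
    have h2 : ‖u‖ ^ 2 ≤ K * (Cc * ‖v‖ * ‖u‖ / γ) := hub.trans (by
      exact mul_le_mul_of_nonneg_left h1 hK.le)
    calc ‖u‖ * ‖u‖ = ‖u‖ ^ 2 := (sq ‖u‖).symm
    _ ≤ K * (Cc * ‖v‖ * ‖u‖ / γ) := h2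
    _ = (K * (Cc / γ) * ‖v‖) * ‖u‖ := by ring
  exact le_of_mul_le_mul_right this h0
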